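/- If t_1, ..., t_{n-1} are transpositions in S_n with t_{n-1} ∘ ... ∘ t_1 = (1 2 ... n), then the transpositions t_1, ..., t_{n-1}, viewed as edges on the vertex set {1,...,n}, form a spanning tree of the complete graph. -/

import Mathlib

open SimpleGraph
open Fin.NatCast

-- swap equality to Sym2 equality
lemma swap_eq_sym2 {α : Type*} [DecidableEq α] {i j x y : α} (hij : i ≠ j) (hxy : x ≠ y)
    (h : Equiv.swap i j = Equiv.swap x y) : s(i, j) = s(x, y) := by
  have hx : Equiv.swap i j x = y := by rw [h]; simp
  rcases eq_or_ne x i with rfl | hxi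
  · rw [Equiv.swap_apply_left] at hx; rw [hx]
  rcases eq_or_ne x j with rfl | hxj
  · rw [Equiv.swap_apply_right] at hx; rw [← hx]; exact Sym2.eq_swap
  · rw [Equiv.swap_apply_of_ne_of_ne hxi hxj] at hx; exact absurd hx hxy

-- deleting a non-bridge edge keeps reachability
lemma reach_del {V : Type*} {G : SimpleGraph V} {v w : V}
    (h : (G \ fromEdgeSet {s(v, w)}).Reachable v w) {a b : V} (p : G.Walk a b) :
    (G \ fromEdgeSet {s(v, w)}).Reachable a b := by
  induction p with
  | nil => rfl
  | cons hadj q ih =>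
    rename_i x y z
    refine Reachable.trans ?_ ih
    by_cases he : s(x, y) = s(v, w)
    · rw [Sym2.eq_iff] at he
      rcases he with ⟨rfl, rfl⟩ | ⟨rfl, rfl⟩
      · exact h
      · exact h.symm
    · exact Adj.reachable (by
        rw [sdiff_adj]
        exact ⟨hadj, by simp [fromEdgeSet_adj, he]⟩)

lemma treeAux {V : Type*} [Fintype V] :
    ∀ (N : ℕ) (G : SimpleGraph V), G.edgeSet.ncard = N → G.Connected →
      N + 1 ≤ Fintype.card V → G.IsTree := by
  intro N
  induction N using Nat.strong_induction_on with
  | _ N IH =>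
    intro G hN hc hcard
    classical
    by_cases hac : G.IsAcyclic
    · exact ⟨hc, hac⟩
    · exfalso
      rw [isAcyclic_iff_forall_edge_isBridge] at hac
      push_neg at hac
      obtain ⟨e, he, hbr⟩ := hac
      induction e with
      | h v w =>
        rw [isBridge_iff] at hbr
        push_neg at hbr
        have hreach : (G \ fromEdgeSet {s(v, w)}).Reachable v w := hbr
        set G' := G \ fromEdgeSet {s(v, w)} with hG'
        have hE' : G'.edgeSet = G.edgeSet \ {s(v, w)} := by
          rw [hG', edgeSet_sdiff, edgeSet_fromEdgeSet, edgeSet_sdiff_sdiff_isDiag]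
        have hfin : G.edgeSet.Finite := Set.toFinite _
        have hNpos : 1 ≤ N := by
          rw [← hN]
          exact (Set.ncard_pos hfin).2 ⟨_, he⟩
        have hN' : G'.edgeSet.ncard = N - 1 := by
          rw [hE', Set.ncard_diff_singleton_of_mem he, hN]
        have hc' : G'.Connected := by
          rw [connected_iff] at hc ⊢
          refine ⟨fun a b => ?_, hc.2⟩
          obtain ⟨p⟩ := hc.1 a b
          exact reach_del hreach p
        have htree := IH (N - 1) (by omega) G' hN' hc' (by omega)
        have h2 : G'.edgeSet.toFinset.card + 1 = Fintype.card V := htree.card_edgeFinset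
        rw [← Set.ncard_eq_toFinset_card'] at h2
        omega

/-- If `t_1, …, t_{n-1}` are transpositions in `S_n` with
`t_{n-1} ∘ ⋯ ∘ t_1 = (1 2 … n)` (realized as `finRotate n`), then the transpositions,
viewed as edges on the vertex set `Fin n` (the transposition `(i j)` giving the edge
`{i, j}`), form a spanning tree of the complete graph. -/
theorem factorization_edges_form_tree (n : ℕ) (hn : 1 ≤ n)
    (t : Fin (n - 1) → Equiv.Perm (Fin n)) (hswap : ∀ k, (t k).IsSwap)
    (hprod : (List.ofFn t).reverse.prod = finRotate n) :
    (SimpleGraph.fromEdgeSet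
      {e : Sym2 (Fin n) | ∃ (k : Fin (n - 1)) (i j : Fin n),
        i ≠ j ∧ t k = Equiv.swap i j ∧ e = s(i, j)}).IsTree := by
  classical
  set S : Set (Sym2 (Fin n)) := {e : Sym2 (Fin n) | ∃ (k : Fin (n - 1)) (i j : Fin n),
        i ≠ j ∧ t k = Equiv.swap i j ∧ e = s(i, j)} with hS
  set G := SimpleGraph.fromEdgeSet S with hG
  -- step along a swap
  have step : ∀ (p : Equiv.Perm (Fin n)), (∃ k, t k = p) → ∀ x, G.Reachable x (p x) := by
    rintro p ⟨k, rfl⟩ x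
    obtain ⟨i, j, hij, hp⟩ := hswap k
    have hadj : G.Adj i j := by
      rw [hG, SimpleGraph.fromEdgeSet_adj]
      exact ⟨⟨k, i, j, hij, hp, rfl⟩, hij⟩
    rw [hp]
    rcases eq_or_ne x i with rfl | hxi
    · rw [Equiv.swap_apply_left]; exact hadj.reachable
    rcases eq_or_ne x j with rfl | hxj
    · rw [Equiv.swap_apply_right]; exact hadj.symm.reachable
    · rw [Equiv.swap_apply_of_ne_of_ne hxi hxj]
  -- products of the t's move within components
  have listReach : ∀ (L : List (Equiv.Perm (Fin n))), (∀ p ∈ L, ∃ k, t k = p) →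
      ∀ x, G.Reachable x (L.prod x) := by
    intro L
    induction L with
    | nil => intro _ x; simpa using SimpleGraph.Reachable.refl x
    | cons a L ih =>
      intro hmem x
      rw [List.prod_cons, Equiv.Perm.mul_apply]
      exact (ih (fun p hp => hmem p (List.mem_cons_of_mem a hp)) x).trans
        (step a (hmem a List.mem_cons_self) _)
  have rotReach : ∀ x, G.Reachable x (finRotate n x) := by
    intro x
    rw [← hprod]
    refine listReach _ ?_ x
    intro p hp
    rw [List.mem_reverse, List.mem_ofFn] at hp
    obtain ⟨k, rfl⟩ := hp
    exact ⟨k, rfl⟩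
  have powReach : ∀ (m : ℕ) (x : Fin n), G.Reachable x (((finRotate n) ^ m) x) := by
    intro m
    induction m with
    | zero => intro x; simpa using SimpleGraph.Reachable.refl x
    | succ m ih =>
      intro x
      rw [pow_succ, Equiv.Perm.mul_apply]
      exact (rotReach x).trans (ih _)
  obtain ⟨m, rfl⟩ : ∃ m, n = m + 1 := ⟨n - 1, by omega⟩
  have powZero : ∀ k : ℕ, ((finRotate (m + 1)) ^ k) 0 = (k : Fin (m + 1)) := by
    intro k
    induction k with
    | zero => simp
    | succ k ih =>
      rw [pow_succ', Equiv.Perm.mul_apply, ih, finRotate_succ_apply]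
      push_cast
      ring
  have hconn : G.Connected := by
    rw [SimpleGraph.connected_iff]
    refine ⟨fun a b => ?_, ⟨0⟩⟩
    have h0 : ∀ v : Fin (m + 1), G.Reachable 0 v := by
      intro v
      have := powReach v.val 0
      rwa [powZero, Fin.cast_val_eq_self] at this
    exact (h0 a).symm.trans (h0 b)
  -- edge count
  let f : Fin (m + 1 - 1) → Sym2 (Fin (m + 1)) := fun k =>
    s((hswap k).choose, (hswap k).choose_spec.choose)
  have hsub : G.edgeSet ⊆ Set.range f := by
    intro e he
    rw [hG, SimpleGraph.edgeSet_fromEdgeSet] at he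
    obtain ⟨k, i, j, hij, hk, rfl⟩ := he.1
    refine ⟨k, ?_⟩
    have h1 := (hswap k).choose_spec.choose_spec
    exact swap_eq_sym2 h1.1 hij (h1.2.symm.trans hk)
  have hcard : G.edgeSet.ncard ≤ m := by
    calc G.edgeSet.ncard ≤ (Set.range f).ncard :=
          Set.ncard_le_ncard hsub (Set.finite_range f)
      _ = (Finset.univ.image f).card := by
          rw [← Set.ncard_coe_finset]; congr 1; simp [Set.ext_iff]
      _ ≤ (Finset.univ : Finset (Fin (m + 1 - 1))).card := Finset.card_image_le
      _ = m := by simp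
  exact treeAux (G.edgeSet.ncard) G rfl hconn (by simp; omega)
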